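/- Let 1 < p ≤ 2 with conjugate exponent p* (1/p + 1/p* = 1), and let a, D ≥ 0 and δ, α, β₁, β₂ > 0 with β₁ < 1 satisfy a^p + αD ≤ δ^p + αβ₁ D + αβ₂ δ + αβ₂ a. Then a^p ≤ p*(δ^p + αβ₂ δ) + (αβ₂)^{p*} and D ≤ (δ^p + αβ₂ δ + (αβ₂)^{p*}/p*) / (α(1 − β₁)). -/

import Mathlib

/-- The key elementary estimate in the convergence-rate proof for `p > 1`. -/
theorem rate_estimate_p_gt_one (p pstar a D δ α β₁ β₂ : ℝ)
    (hp : 1 < p) (hp2 : p ≤ 2) (hconj : 1 / p + 1 / pstar = 1)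
    (ha : 0 ≤ a) (hD : 0 ≤ D) (hδ : 0 < δ) (hα : 0 < α)
    (hβ₁ : 0 < β₁) (hβ₂ : 0 < β₂) (hβ₁lt : β₁ < 1)
    (h : a ^ p + α * D ≤ δ ^ p + α * β₁ * D + α * β₂ * δ + α * β₂ * a) :
    a ^ p ≤ pstar * (δ ^ p + α * β₂ * δ) + (α * β₂) ^ pstar ∧
      D ≤ (δ ^ p + α * β₂ * δ + (α * β₂) ^ pstar / pstar) / (α * (1 - β₁)) := by
  have hcj : p.HolderConjugate pstar := Real.holderConjugate_iff.mpr ⟨hp, by simpa [one_div] using hconj⟩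
  have hq : 0 < pstar := hcj.symm.pos
  have hyoung : a * (α * β₂) ≤ a ^ p / p + (α * β₂) ^ pstar / pstar :=
    Real.young_inequality_of_nonneg ha (by positivity) hcj
  -- key inequality
  have hkey : a ^ p / pstar + α * (1 - β₁) * D ≤
      δ ^ p + α * β₂ * δ + (α * β₂) ^ pstar / pstar := by
    have hinv : 1 / pstar = 1 - 1 / p := by linarith
    have h1 : a ^ p / pstar = a ^ p - a ^ p / p := by
      rw [div_eq_mul_one_div, hinv]; ring
    nlinarith [hyoung, h]
  have hap : 0 ≤ a ^ p := Real.rpow_nonneg ha p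
  constructor
  · have h2 : a ^ p / pstar ≤ δ ^ p + α * β₂ * δ + (α * β₂) ^ pstar / pstar := by
      nlinarith [mul_nonneg (mul_nonneg hα.le (by linarith : (0:ℝ) ≤ 1 - β₁)) hD]
    rw [div_le_iff₀ hq] at h2
    calc a ^ p ≤ (δ ^ p + α * β₂ * δ + (α * β₂) ^ pstar / pstar) * pstar := h2
      _ = pstar * (δ ^ p + α * β₂ * δ) + (α * β₂) ^ pstar := by
          field_simp
  · have h3 : α * (1 - β₁) * D ≤ δ ^ p + α * β₂ * δ + (α * β₂) ^ pstar / pstar := by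
      nlinarith [div_nonneg hap hq.le]
    rw [le_div_iff₀ (mul_pos hα (by linarith : (0:ℝ) < 1 - β₁))]
    linarith [h3]
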